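/- Let A, B, C, D be bounded linear operators on G and let Λ be a self-adjoint linear relation on G such that Λ = Λ^{A,B} = Λ^{C,D}. If the pair (A,B) is normalized, then there exists a bounded injective linear operator L on G such that C = L A and D = L B. -/

import Mathlib

open ContinuousLinearMap

variable {G : Type*} [NormedAddCommGroup G] [InnerProductSpace ℂ G] [CompleteSpace G]

/-- The operator `M^{A,B}` on `G × G`, `(x₁,x₂) ↦ (A x₁ - B x₂, B x₁ + A x₂)`. -/
noncomputable def MAB (A B : G →L[ℂ] G) : (G × G) →L[ℂ] (G × G) :=
  ((A.comp (fst ℂ G G)) - (B.comp (snd ℂ G G))).prod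
    ((B.comp (fst ℂ G G)) + (A.comp (snd ℂ G G)))

/-- The linear relation `Λ^{A,B} = {(x₁,x₂) : A x₁ = B x₂}`. -/
def LambdaAB (A B : G →L[ℂ] G) : Submodule ℂ (G × G) where
  carrier := {p | A p.1 = B p.2}
  add_mem' := by
    intro a b ha hb
    simp only [Set.mem_setOf_eq] at *
    simp [ha, hb]
  zero_mem' := by simp
  smul_mem' := by
    intro c p hp
    simp only [Set.mem_setOf_eq] at *
    simp [hp]

/-- The adjoint of a linear relation. -/
def relAdjoint (Λ : Submodule ℂ (G × G)) : Submodule ℂ (G × G) where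
  carrier := {p | ∀ q ∈ Λ, (inner ℂ p.1 q.2 : ℂ) = inner ℂ p.2 q.1}
  add_mem' := by
    intro a b ha hb q hq
    simp [inner_add_left, ha q hq, hb q hq]
  zero_mem' := by
    intro q hq; simp
  smul_mem' := by
    intro c p hp q hq
    simp [inner_smul_left, hp q hq]

/-- A linear relation is self-adjoint if it equals its adjoint. -/
def IsSelfAdjointRel (Λ : Submodule ℂ (G × G)) : Prop := relAdjoint Λ = Λ

/-- A bounded operator is boundedly invertible if it has a bounded two-sided inverse. -/
def IsBoundedlyInvertible {E F : Type*} [NormedAddCommGroup E] [NormedSpace ℂ E]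
    [NormedAddCommGroup F] [NormedSpace ℂ F] (T : E →L[ℂ] F) : Prop :=
  ∃ T' : F →L[ℂ] E, (∀ x, T' (T x) = x) ∧ (∀ y, T (T' y) = y)

/-- The pair `(A,B)` is normalized if `A B* = B A*` and `M^{A,B}` is boundedly invertible. -/
noncomputable def IsNormalized (A B : G →L[ℂ] G) : Prop :=
  A ∘L adjoint B = B ∘L adjoint A ∧ IsBoundedlyInvertible (MAB A B)

/-- If a self-adjoint relation is parameterized both by a normalized
pair `(A,B)` and by `(C,D)`, then `C = L A` and `D = L B` for some bounded injective `L`. -/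
theorem exists_injective_factor_of_normalized (A B C D : G →L[ℂ] G)
    (Λ : Submodule ℂ (G × G)) (hΛ : IsSelfAdjointRel Λ)
    (hAB : Λ = LambdaAB A B) (hCD : Λ = LambdaAB C D)
    (hnorm : IsNormalized A B) :
    ∃ L : G →L[ℂ] G, Function.Injective L ∧ C = L ∘L A ∧ D = L ∘L B := by
  obtain ⟨-, M', hM1, hM2⟩ := hnorm
  set T : (G × G) →L[ℂ] G := (fst ℂ G G) ∘L MAB A B with hT
  set S : (G × G) →L[ℂ] G := (C ∘L fst ℂ G G) - (D ∘L snd ℂ G G) with hS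
  have hTapp : ∀ x : G × G, T x = A x.1 - B x.2 := fun x => rfl
  have hSapp : ∀ x : G × G, S x = C x.1 - D x.2 := fun x => rfl
  have hker : ∀ x : G × G, T x = 0 ↔ S x = 0 := by
    intro x
    rw [hTapp, hSapp, sub_eq_zero, sub_eq_zero]
    constructor
    · intro hx
      have hxΛ : x ∈ Λ := by rw [hAB]; exact hx
      rw [hCD] at hxΛ; exact hxΛ
    · intro hx
      have hxΛ : x ∈ Λ := by rw [hCD]; exact hx
      rw [hAB] at hxΛ; exact hxΛ
  set R : G →L[ℂ] (G × G) := M' ∘L (ContinuousLinearMap.inl ℂ G G) with hR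
  have hTR : ∀ y, T (R y) = y := by
    intro y
    show ((MAB A B) (M' (y, 0))).1 = y
    rw [hM2]
  have hSR : ∀ z : G × G, S (R (T z)) = S z := by
    intro z
    have h0 : T (R (T z) - z) = 0 := by rw [map_sub, hTR, sub_self]
    have := (hker _).mp h0
    rw [map_sub, sub_eq_zero] at this
    exact this
  refine ⟨S ∘L R, ?_, ?_, ?_⟩
  · intro y₁ y₂ h
    have h' : S (R (y₁ - y₂)) = 0 := by
      simp only [coe_comp', Function.comp_apply] at h
      rw [map_sub, map_sub, h, sub_self]
    have hk : T (R (y₁ - y₂)) = 0 := (hker _).mpr h'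
    rw [hTR] at hk
    exact sub_eq_zero.mp hk
  · ext x
    have hA : A x = T (x, 0) := by rw [hTapp]; simp
    symm
    show S (R (A x)) = C x
    rw [hA, hSR, hSapp]
    simp
  · ext x
    have hB : B x = T (0, -x) := by rw [hTapp]; simp
    symm
    show S (R (B x)) = D x
    rw [hB, hSR, hSapp]
    simp
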